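/- The infinite hexagonal lattice graph (the infinite 3-regular honeycomb grid) has an efficient dominating set, i.e., a set S of vertices such that every vertex has exactly one element of its closed neighborhood in S. -/

import Mathlib

open SimpleGraph

/-- The closed neighborhood `N[v]` of a vertex. -/
def closedNbhd {V : Type*} (G : SimpleGraph V) (v : V) : Set V :=
  insert v (G.neighborSet v)

/-- `S` is an efficient dominating set: `|N[v] ∩ S| = 1` for every vertex `v`. -/
def isEDS {V : Type*} (G : SimpleGraph V) (S : Set V) : Prop :=
  ∀ v : V, ∃! u : V, u ∈ S ∧ u ∈ closedNbhd G v

/-- `S` is a 2-packing: closed neighborhoods of distinct members are disjoint. -/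
def twoPacking {V : Type*} (G : SimpleGraph V) (S : Set V) : Prop :=
  S.Pairwise fun u v => Disjoint (closedNbhd G u) (closedNbhd G v)

/-- The influence of `S`: the number of vertices dominated by `S`. -/
noncomputable def influence {V : Type*} (G : SimpleGraph V) (S : Set V) : ℕ :=
  (⋃ v ∈ S, closedNbhd G v).ncard

/-- The efficient domination number `F(G)`: maximum influence of a 2-packing. -/
noncomputable def effDomNum {V : Type*} (G : SimpleGraph V) : ℕ :=
  sSup {n | ∃ S : Set V, twoPacking G S ∧ influence G S = n}

/-- The infinite hexagonal (honeycomb) lattice graph. -/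
def hexG : SimpleGraph ((ℤ × ℤ) × Bool) :=
  SimpleGraph.fromRel (fun a b =>
    a.2 = false ∧ b.2 = true ∧
      (b.1 = a.1 ∨ b.1 = (a.1.1 - 1, a.1.2) ∨ b.1 = (a.1.1, a.1.2 - 1)))

lemma mem0 (i j : ℤ) (u : (ℤ × ℤ) × Bool) :
    u ∈ closedNbhd hexG ((i,j),false) ↔
      u = ((i,j),false) ∨ u = ((i,j),true) ∨ u = ((i-1,j),true) ∨ u = ((i,j-1),true) := by
  obtain ⟨⟨x,y⟩,c⟩ := u
  simp [closedNbhd, hexG, SimpleGraph.fromRel_adj, SimpleGraph.mem_neighborSet, Prod.ext_iff]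
  cases c <;> simp <;> tauto

lemma mem1 (i j : ℤ) (u : (ℤ × ℤ) × Bool) :
    u ∈ closedNbhd hexG ((i,j),true) ↔
      u = ((i,j),true) ∨ u = ((i,j),false) ∨ u = ((i+1,j),false) ∨ u = ((i,j+1),false) := by
  obtain ⟨⟨x,y⟩,c⟩ := u
  simp [closedNbhd, hexG, SimpleGraph.fromRel_adj, SimpleGraph.mem_neighborSet, Prod.ext_iff]
  cases c <;> simp <;> constructor <;> intro h <;> [omega; skip] <;>
    rcases h with ⟨h1,h2⟩|⟨h1,h2⟩|⟨h1,h2⟩ <;> omega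

def S0 : Set ((ℤ × ℤ) × Bool) :=
  {v | if v.2 then v.1.1 % 2 = 1 ∧ v.1.2 % 2 = 1 else v.1.1 % 2 = 0 ∧ v.1.2 % 2 = 0}

lemma memS0 (x y : ℤ) (c : Bool) :
    ((x,y),c) ∈ S0 ↔ if c then x % 2 = 1 ∧ y % 2 = 1 else x % 2 = 0 ∧ y % 2 = 0 := Iff.rfl

theorem stmt18_aux : ∀ v : (ℤ × ℤ) × Bool, ∃! u : (ℤ × ℤ) × Bool, u ∈ S0 ∧ u ∈ closedNbhd hexG v := by
  rintro ⟨⟨i,j⟩,b⟩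
  cases b
  · -- v = ((i,j), false); witness depends on parities
    rcases Int.emod_two_eq i with hi | hi <;> rcases Int.emod_two_eq j with hj | hj
    · refine ⟨((i,j),false), ⟨⟨hi,hj⟩, (mem0 i j _).2 (by tauto)⟩, ?_⟩
      rintro u ⟨hS, hN⟩
      rcases (mem0 i j u).1 hN with rfl|rfl|rfl|rfl <;> simp [memS0] at hS ⊢ <;> omega
    · refine ⟨((i-1,j),true), ⟨by simp [memS0]; omega, (mem0 i j _).2 (by tauto)⟩, ?_⟩
      rintro u ⟨hS, hN⟩
      rcases (mem0 i j u).1 hN with rfl|rfl|rfl|rfl <;> simp [memS0] at hS ⊢ <;> omega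
    · refine ⟨((i,j-1),true), ⟨by simp [memS0]; omega, (mem0 i j _).2 (by tauto)⟩, ?_⟩
      rintro u ⟨hS, hN⟩
      rcases (mem0 i j u).1 hN with rfl|rfl|rfl|rfl <;> simp [memS0] at hS ⊢ <;> omega
    · refine ⟨((i,j),true), ⟨⟨hi,hj⟩, (mem0 i j _).2 (by tauto)⟩, ?_⟩
      rintro u ⟨hS, hN⟩
      rcases (mem0 i j u).1 hN with rfl|rfl|rfl|rfl <;> simp [memS0] at hS ⊢ <;> omega
  · rcases Int.emod_two_eq i with hi | hi <;> rcases Int.emod_two_eq j with hj | hj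
    · refine ⟨((i,j),false), ⟨⟨hi,hj⟩, (mem1 i j _).2 (by tauto)⟩, ?_⟩
      rintro u ⟨hS, hN⟩
      rcases (mem1 i j u).1 hN with rfl|rfl|rfl|rfl <;> simp [memS0] at hS ⊢ <;> omega
    · refine ⟨((i,j+1),false), ⟨by simp [memS0]; omega, (mem1 i j _).2 (by tauto)⟩, ?_⟩
      rintro u ⟨hS, hN⟩
      rcases (mem1 i j u).1 hN with rfl|rfl|rfl|rfl <;> simp [memS0] at hS ⊢ <;> omega
    · refine ⟨((i+1,j),false), ⟨by simp [memS0]; omega, (mem1 i j _).2 (by tauto)⟩, ?_⟩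
      rintro u ⟨hS, hN⟩
      rcases (mem1 i j u).1 hN with rfl|rfl|rfl|rfl <;> simp [memS0] at hS ⊢ <;> omega
    · refine ⟨((i,j),true), ⟨⟨hi,hj⟩, (mem1 i j _).2 (by tauto)⟩, ?_⟩
      rintro u ⟨hS, hN⟩
      rcases (mem1 i j u).1 hN with rfl|rfl|rfl|rfl <;> simp [memS0] at hS ⊢ <;> omega

theorem stmt18 : ∃ S : Set ((ℤ × ℤ) × Bool), isEDS hexG S := ⟨S0, stmt18_aux⟩
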